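/- The ideal ⟨[123],[145],[167]⟩ of 3×3 minors in ℂ[x_{1,1},...,x_{3,7}] (minors taken of the 3×7 generic matrix on the column triples {1,2,3},{1,4,5},{1,6,7}) contains neither [234][567] − [235][467] nor the variables x_{1,1}, x_{2,1}, x_{3,1}, but its zero set is the union of the zero set of ⟨x_{1,1},x_{2,1},x_{3,1}⟩ and the zero set of ⟨[123],[145],[167],[234][567]−[235][467]⟩. -/

import Mathlib

open MvPolynomial

/-- The `3×3` minor of the generic `3×7` matrix on columns `a, b, c`. -/
noncomputable def genMinor (a b c : Fin 7) : MvPolynomial (Fin 3 × Fin 7) ℂ :=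
  ((Matrix.of fun i j => (X (i, j) : MvPolynomial (Fin 3 × Fin 7) ℂ)).submatrix
      id ![a, b, c]).det

lemma genMinor_eq (a b c : Fin 7) : genMinor a b c =
    X (0,a)*X (1,b)*X (2,c) - X (0,a)*X (1,c)*X (2,b) - X (0,b)*X (1,a)*X (2,c)
      + X (0,b)*X (1,c)*X (2,a) + X (0,c)*X (1,a)*X (2,b) - X (0,c)*X (1,b)*X (2,a) := by
  simp [genMinor, Matrix.det_fin_three]

lemma laplace0 (a b c : Fin 7) :
    X ((0:Fin 3),(0:Fin 7)) * genMinor a b c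
      = X (0,a) * genMinor 0 b c - X (0,b) * genMinor 0 a c + X (0,c) * genMinor 0 a b := by
  simp only [genMinor_eq]; ring

lemma laplace1 (a b c : Fin 7) :
    X ((1:Fin 3),(0:Fin 7)) * genMinor a b c
      = X (1,a) * genMinor 0 b c - X (1,b) * genMinor 0 a c + X (1,c) * genMinor 0 a b := by
  simp only [genMinor_eq]; ring

lemma laplace2 (a b c : Fin 7) :
    X ((2:Fin 3),(0:Fin 7)) * genMinor a b c
      = X (2,a) * genMinor 0 b c - X (2,b) * genMinor 0 a c + X (2,c) * genMinor 0 a b := by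
  simp only [genMinor_eq]; ring

lemma plucker (a b c d : Fin 7) :
    genMinor 0 a b * genMinor 0 c d - genMinor 0 a c * genMinor 0 b d
      + genMinor 0 a d * genMinor 0 b c = 0 := by
  simp only [genMinor_eq]; ring

lemma assemble {R : Type*} [CommRing R]
    (x0 x1 x2 x3 x4 x5 x6 m123 m456 m124 m356
      b12 b34 b56 b13 b14 b15 b16 b23 b24 b25 b26 b35 b36 b45 b46 : R)
    (L1 : x0 * m123 = x1*b23 - x2*b13 + x3*b12)
    (L2 : x0 * m124 = x1*b24 - x2*b14 + x4*b12)
    (L3 : x0 * m456 = x4*b56 - x5*b46 + x6*b45)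
    (L4 : x0 * m356 = x3*b56 - x5*b36 + x6*b35)
    (P1 : b23*b46 - b24*b36 + b26*b34 = 0)
    (P2 : b23*b45 - b24*b35 + b25*b34 = 0)
    (P3 : b13*b46 - b14*b36 + b16*b34 = 0)
    (P4 : b13*b45 - b14*b35 + b15*b34 = 0) :
    x0 * x0 * (m123*m456 - m124*m356)
      = (x3*(x6*b45 - x5*b46) - x4*(x6*b35 - x5*b36)) * b12
        + (x1*x5*b26 - x1*x6*b25 - x2*x5*b16 + x2*x6*b15) * b34
        + (x4*(x1*b23 - x2*b13) - x3*(x1*b24 - x2*b14)) * b56 := by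
  linear_combination (x0*m456) * L1 + (x1*b23 - x2*b13 + x3*b12) * L3
    - (x0*m356) * L2 - (x1*b24 - x2*b14 + x4*b12) * L4
    - (x1*x5) * P1 + (x1*x6) * P2 + (x2*x5) * P3 - (x2*x6) * P4

lemma key (i : Fin 3) :
    X (i,(0:Fin 7)) * X (i,0) *
      (genMinor 1 2 3 * genMinor 4 5 6 - genMinor 1 2 4 * genMinor 3 5 6)
    = (X (i,3) * (X (i,6) * genMinor 0 4 5 - X (i,5) * genMinor 0 4 6)
        - X (i,4) * (X (i,6) * genMinor 0 3 5 - X (i,5) * genMinor 0 3 6)) * genMinor 0 1 2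
    + (X (i,1) * X (i,5) * genMinor 0 2 6 - X (i,1) * X (i,6) * genMinor 0 2 5
        - X (i,2) * X (i,5) * genMinor 0 1 6 + X (i,2) * X (i,6) * genMinor 0 1 5) * genMinor 0 3 4
    + (X (i,4) * (X (i,1) * genMinor 0 2 3 - X (i,2) * genMinor 0 1 3)
        - X (i,3) * (X (i,1) * genMinor 0 2 4 - X (i,2) * genMinor 0 1 4)) * genMinor 0 5 6 := by
  fin_cases i
  · exact assemble _ _ _ _ _ _ _ _ _ _ _ _ _ _ _ _ _ _ _ _ _ _ _ _ _ _
      (laplace0 1 2 3) (laplace0 1 2 4) (laplace0 4 5 6) (laplace0 3 5 6)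
      (plucker 2 3 4 6) (plucker 2 3 4 5) (plucker 1 3 4 6) (plucker 1 3 4 5)
  · exact assemble _ _ _ _ _ _ _ _ _ _ _ _ _ _ _ _ _ _ _ _ _ _ _ _ _ _
      (laplace1 1 2 3) (laplace1 1 2 4) (laplace1 4 5 6) (laplace1 3 5 6)
      (plucker 2 3 4 6) (plucker 2 3 4 5) (plucker 1 3 4 6) (plucker 1 3 4 5)
  · exact assemble _ _ _ _ _ _ _ _ _ _ _ _ _ _ _ _ _ _ _ _ _ _ _ _ _ _
      (laplace2 1 2 3) (laplace2 1 2 4) (laplace2 4 5 6) (laplace2 3 5 6)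
      (plucker 2 3 4 6) (plucker 2 3 4 5) (plucker 1 3 4 6) (plucker 1 3 4 5)

lemma eval_span_zero {x : Fin 3 × Fin 7 → ℂ} {S : Set (MvPolynomial (Fin 3 × Fin 7) ℂ)}
    (h : ∀ g ∈ S, eval x g = 0) {f : MvPolynomial (Fin 3 × Fin 7) ℂ}
    (hf : f ∈ Ideal.span S) : eval x f = 0 := by
  have hle : Ideal.span S ≤ RingHom.ker (eval x) :=
    Ideal.span_le.mpr fun g hg => RingHom.mem_ker.mpr (h g hg)
  exact RingHom.mem_ker.mp (hle hf)

/-- a point with zero first column at which `q` evaluates to `1` -/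
noncomputable def pt1 : Fin 3 × Fin 7 → ℂ := fun v =>
  if v = (0,1) ∨ v = (1,2) ∨ v = (2,3) ∨ v = (0,4) ∨ v = (1,5) ∨ v = (2,6) then 1 else 0

/-- a point with all-ones first column, all other columns zero -/
noncomputable def pt2 : Fin 3 × Fin 7 → ℂ := fun v => if v.2 = 0 then 1 else 0

lemma pt1_eval : eval pt1 (genMinor 0 1 2) = 0 ∧ eval pt1 (genMinor 0 3 4) = 0
    ∧ eval pt1 (genMinor 0 5 6) = 0
    ∧ eval pt1 (genMinor 1 2 3 * genMinor 4 5 6 - genMinor 1 2 4 * genMinor 3 5 6) = 1 := by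
  simp [genMinor_eq, pt1, Prod.ext_iff]

lemma pt2_eval : eval pt2 (genMinor 0 1 2) = 0 ∧ eval pt2 (genMinor 0 3 4) = 0
    ∧ eval pt2 (genMinor 0 5 6) = 0 ∧ ∀ i : Fin 3, eval pt2 (X (i,(0:Fin 7))) = 1 := by
  simp [genMinor_eq, pt2]

lemma main_aux :
    (genMinor 1 2 3 * genMinor 4 5 6 - genMinor 1 2 4 * genMinor 3 5 6)
        ∉ Ideal.span {genMinor 0 1 2, genMinor 0 3 4, genMinor 0 5 6} ∧
      (∀ i : Fin 3, (X (i, 0) : MvPolynomial (Fin 3 × Fin 7) ℂ)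
        ∉ Ideal.span {genMinor 0 1 2, genMinor 0 3 4, genMinor 0 5 6}) ∧
      zeroLocus ℂ (Ideal.span {genMinor 0 1 2, genMinor 0 3 4, genMinor 0 5 6}) =
        zeroLocus ℂ (Ideal.span {(X ((0 : Fin 3), (0 : Fin 7)) : MvPolynomial (Fin 3 × Fin 7) ℂ),
            X ((1 : Fin 3), (0 : Fin 7)), X ((2 : Fin 3), (0 : Fin 7))}) ∪
          zeroLocus ℂ (Ideal.span {genMinor 0 1 2, genMinor 0 3 4, genMinor 0 5 6,
            genMinor 1 2 3 * genMinor 4 5 6 - genMinor 1 2 4 * genMinor 3 5 6}) := by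
  obtain ⟨e1, e2, e3, eq1⟩ := pt1_eval
  refine ⟨?_, ?_, ?_⟩
  · -- q ∉ I
    intro hmem
    have h0 : eval pt1 (genMinor 1 2 3 * genMinor 4 5 6 - genMinor 1 2 4 * genMinor 3 5 6) = 0 := by
      refine eval_span_zero ?_ hmem
      intro g hg
      rcases hg with rfl | rfl | rfl
      exacts [e1, e2, e3]
    rw [eq1] at h0
    exact one_ne_zero h0
  · -- X (i,0) ∉ I
    obtain ⟨f1, f2, f3, fx⟩ := pt2_eval
    intro i hmem
    have h0 : eval pt2 (X (i, 0)) = 0 := by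
      refine eval_span_zero ?_ hmem
      intro g hg
      rcases hg with rfl | rfl | rfl
      exacts [f1, f2, f3]
    rw [fx i] at h0
    exact one_ne_zero h0
  · -- zero locus decomposition
    apply Set.Subset.antisymm
    · intro x hx
      have hg1 : eval x (genMinor 0 1 2) = 0 := hx _ (Ideal.subset_span (by simp))
      have hg2 : eval x (genMinor 0 3 4) = 0 := hx _ (Ideal.subset_span (by simp))
      have hg3 : eval x (genMinor 0 5 6) = 0 := hx _ (Ideal.subset_span (by simp))
      by_cases hc : ∀ i : Fin 3, x (i, 0) = 0
      · left
        intro p hp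
        refine eval_span_zero ?_ hp
        intro g hg
        rcases hg with rfl | rfl | rfl <;> simpa using hc _
      · right
        push_neg at hc
        obtain ⟨i, hi⟩ := hc
        have hkey := congrArg (eval x) (key i)
        simp only [map_add, map_sub, map_mul, eval_X, hg1, hg2, hg3, mul_zero, zero_mul,
          add_zero, zero_add, sub_zero] at hkey
        have hq : eval x (genMinor 1 2 3 * genMinor 4 5 6
            - genMinor 1 2 4 * genMinor 3 5 6) = 0 := by
          have h2 := ((mul_eq_zero.mp hkey).resolve_left (mul_ne_zero hi hi))
          simpa [map_sub, map_mul] using h2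
        intro p hp
        refine eval_span_zero ?_ hp
        intro g hg
        rcases hg with rfl | rfl | rfl | rfl
        exacts [hg1, hg2, hg3, hq]
    · intro x hx
      rcases hx with hx | hx
      · have h00 : x ((0:Fin 3), (0:Fin 7)) = 0 := by
          simpa using hx (X ((0:Fin 3), (0:Fin 7))) (Ideal.subset_span (by simp))
        have h10 : x ((1:Fin 3), (0:Fin 7)) = 0 := by
          simpa using hx (X ((1:Fin 3), (0:Fin 7))) (Ideal.subset_span (by simp))
        have h20 : x ((2:Fin 3), (0:Fin 7)) = 0 := by
          simpa using hx (X ((2:Fin 3), (0:Fin 7))) (Ideal.subset_span (by simp))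
        intro p hp
        refine eval_span_zero ?_ hp
        intro g hg
        rcases hg with rfl | rfl | rfl <;>
          simp only [genMinor_eq, map_sub, map_add, map_mul, eval_X, h00, h10, h20,
            mul_zero, zero_mul, sub_zero, add_zero, zero_add, zero_sub, neg_zero, sub_self]
      · refine zeroLocus_anti_mono (Ideal.span_mono ?_) hx
        intro y hy
        simp only [Set.mem_insert_iff, Set.mem_singleton_iff] at hy ⊢
        rcases hy with h | h | h
        exacts [Or.inl h, Or.inr (Or.inl h), Or.inr (Or.inr (Or.inl h))]

theorem stmt_13 :
    let I : Ideal (MvPolynomial (Fin 3 × Fin 7) ℂ) :=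
      Ideal.span {genMinor 0 1 2, genMinor 0 3 4, genMinor 0 5 6}
    let q : MvPolynomial (Fin 3 × Fin 7) ℂ :=
      genMinor 1 2 3 * genMinor 4 5 6 - genMinor 1 2 4 * genMinor 3 5 6
    q ∉ I ∧ (∀ i : Fin 3, (X (i, 0) : MvPolynomial (Fin 3 × Fin 7) ℂ) ∉ I) ∧
      zeroLocus ℂ I =
        zeroLocus ℂ (Ideal.span {(X ((0 : Fin 3), (0 : Fin 7)) : MvPolynomial (Fin 3 × Fin 7) ℂ),
            X ((1 : Fin 3), (0 : Fin 7)), X ((2 : Fin 3), (0 : Fin 7))}) ∪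
          zeroLocus ℂ (Ideal.span {genMinor 0 1 2, genMinor 0 3 4, genMinor 0 5 6, q}) := by
  exact main_aux
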